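/- If G is a 3-colourable graph with no induced path on 4 vertices (P_4-free), then the minimum size of an independent odd cycle transversal of G equals the minimum size of an odd cycle transversal of G. -/
import Mathlib


open SimpleGraph

/-- `S` is an independent set of `G`. -/
def IsIS {V : Type*} (G : SimpleGraph V) (S : Set V) : Prop :=
  S.Pairwise fun u v => ¬ G.Adj u v

/-- `G` contains no induced subgraph isomorphic to `H`. -/
def HFree {W V : Type*} (H : SimpleGraph W) (G : SimpleGraph V) : Prop :=
  IsEmpty (H ↪g G)

/-- `G` is bipartite: the vertex set splits into two independent sets. -/
def IsBip {V : Type*} (G : SimpleGraph V) : Prop :=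
  ∃ X : Set V, IsIS G X ∧ IsIS G Xᶜ

/-- `S` is a vertex cover of `G`. -/
def IsVC {V : Type*} (G : SimpleGraph V) (S : Finset V) : Prop :=
  ∀ ⦃u v⦄, G.Adj u v → u ∈ S ∨ v ∈ S

/-- minimum size of a vertex cover. -/
noncomputable def vc {V : Type*} (G : SimpleGraph V) : ℕ :=
  sInf {n | ∃ S : Finset V, IsVC G S ∧ S.card = n}

/-- minimum size of an independent vertex cover. -/
noncomputable def ivc {V : Type*} (G : SimpleGraph V) : ℕ :=
  sInf {n | ∃ S : Finset V, IsVC G S ∧ IsIS G ↑S ∧ S.card = n}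

/-- `S` is an odd cycle transversal of `G`: removing it leaves a bipartite graph. -/
def IsOCT {V : Type*} (G : SimpleGraph V) (S : Finset V) : Prop :=
  (G.induce ((S : Set V)ᶜ)).Colorable 2

/-- minimum size of an odd cycle transversal. -/
noncomputable def oct {V : Type*} (G : SimpleGraph V) : ℕ :=
  sInf {n | ∃ S : Finset V, IsOCT G S ∧ S.card = n}

/-- minimum size of an independent odd cycle transversal. -/
noncomputable def ioct {V : Type*} (G : SimpleGraph V) : ℕ :=
  sInf {n | ∃ S : Finset V, IsOCT G S ∧ IsIS G ↑S ∧ S.card = n}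


section AuxOCT
open Finset

def Pat {V : Type*} (G : SimpleGraph V) : Prop :=
  ∀ a b c d : V, G.Adj a b → G.Adj b c → G.Adj c d →
    ¬G.Adj a c → ¬G.Adj b d → ¬G.Adj a d → False


lemma pat_of_hfree {V : Type*} {G : SimpleGraph V} (hfree : HFree (pathGraph 4) G) : Pat G := by
  intro a b c d h1 h2 h3 n1 n2 n3
  have hab : a ≠ b := h1.ne
  have hbc : b ≠ c := h2.ne
  have hcd : c ≠ d := h3.ne
  have hac : a ≠ c := fun h => n3 (h ▸ h3)
  have hbd : b ≠ d := fun h => n3 (h ▸ h1)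
  have had : a ≠ d := fun h => n1 (h ▸ h3.symm)
  refine hfree.false ⟨⟨![a,b,c,d], ?_⟩, ?_⟩
  · intro i j
    fin_cases i <;> fin_cases j <;>
      simp only [Matrix.cons_val_zero, Matrix.cons_val_one, Matrix.head_cons,
        Matrix.cons_val_two, Matrix.tail_cons, Matrix.cons_val_three, Matrix.head_fin_const] <;>
      intro hij <;>
      first
      | rfl
      | decide
      | exact absurd hij hab | exact absurd hij.symm hab
      | exact absurd hij hbc | exact absurd hij.symm hbc
      | exact absurd hij hcd | exact absurd hij.symm hcd
      | exact absurd hij hac | exact absurd hij.symm hac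
      | exact absurd hij hbd | exact absurd hij.symm hbd
      | exact absurd hij had | exact absurd hij.symm had
  · intro i j
    fin_cases i <;> fin_cases j <;>
      simp only [Matrix.cons_val_zero, Matrix.cons_val_one, Matrix.head_cons,
        Matrix.cons_val_two, Matrix.tail_cons, Matrix.cons_val_three, Matrix.head_fin_const,
        pathGraph_adj] <;> norm_num <;>
      first
      | exact h1 | exact h1.symm | exact h2 | exact h2.symm | exact h3 | exact h3.symm
      | exact n1 | exact fun h => n1 h.symm
      | exact n2 | exact fun h => n2 h.symm
      | exact n3 | exact fun h => n3 h.symm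

lemma patCompl {V : Type*} {G : SimpleGraph V} (hpat : Pat G) : Pat Gᶜ := by
  intro a b c d h1 h2 h3 n1 n2 n3
  have hac : a ≠ c := fun h => n3 (h ▸ h3)
  have hbd : b ≠ d := fun h => n3 (h ▸ h1)
  have had : a ≠ d := fun h => n1 (h ▸ h3.symm)
  rw [compl_adj] at h1 h2 h3
  have gac : G.Adj a c := by by_contra h; exact n1 ⟨hac, h⟩
  have gbd : G.Adj b d := by by_contra h; exact n2 ⟨hbd, h⟩
  have gad : G.Adj a d := by by_contra h; exact n3 ⟨had, h⟩
  exact hpat c a d b gac.symm gad gbd.symm h3.2 h1.2 (fun h => h2.2 h.symm)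
lemma case1 {V : Type*} [DecidableEq V] (H : SimpleGraph V) (hpat : Pat H)
    (s : Finset V) (v : V) (hv : v ∈ s) (B C : Finset V)
    (hBC : B ∪ C = s.erase v) (hdisj : ∀ x ∈ B, x ∉ C)
    (hB : B.Nonempty) (hC : C.Nonempty)
    (hanti : ∀ x ∈ B, ∀ y ∈ C, ¬H.Adj x y) :
    ∃ X ⊆ s, X.Nonempty ∧ (s \ X).Nonempty ∧
      ((∀ x ∈ X, ∀ y ∈ s \ X, ¬H.Adj x y) ∨ (∀ x ∈ X, ∀ y ∈ s \ X, H.Adj x y)) := by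
  classical
  have hBe : B ⊆ s.erase v := hBC ▸ subset_union_left
  have hCe : C ⊆ s.erase v := hBC ▸ subset_union_right
  have hBs : B ⊆ s := hBe.trans (erase_subset v s)
  have hCs : C ⊆ s := hCe.trans (erase_subset v s)
  have hvB : v ∉ B := fun h => (mem_erase.1 (hBe h)).1 rfl
  have hvC : v ∉ C := fun h => (mem_erase.1 (hCe h)).1 rfl
  have hcases : ∀ y ∈ s, y = v ∨ y ∈ B ∨ y ∈ C := by
    intro y hy
    by_cases h : y = v
    · exact Or.inl h
    · right
      have : y ∈ s.erase v := mem_erase.2 ⟨h, hy⟩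
      rw [← hBC] at this
      exact mem_union.1 this
  by_cases hC1e : ∀ y ∈ C, ¬ H.Adj v y
  · refine ⟨C, hCs, hC, ⟨v, mem_sdiff.2 ⟨hv, hvC⟩⟩, Or.inl ?_⟩
    intro x hx y hy
    rcases hcases y (mem_sdiff.1 hy).1 with rfl | hyB | hyC
    · exact fun h => hC1e x hx h.symm
    · exact fun h => hanti y hyB x hx h.symm
    · exact absurd hyC (mem_sdiff.1 hy).2
  by_cases hB1e : ∀ y ∈ B, ¬ H.Adj v y
  · refine ⟨B, hBs, hB, ⟨v, mem_sdiff.2 ⟨hv, hvB⟩⟩, Or.inl ?_⟩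
    intro x hx y hy
    rcases hcases y (mem_sdiff.1 hy).1 with rfl | hyB | hyC
    · exact fun h => hB1e x hx h.symm
    · exact absurd hyB (mem_sdiff.1 hy).2
    · exact hanti x hx y hyC
  push_neg at hC1e hB1e
  obtain ⟨c0, hc0C, hc0⟩ := hC1e
  obtain ⟨b0, hb0B, hb0⟩ := hB1e
  by_cases hB0 : ∃ x ∈ B, ¬ H.Adj v x
  · obtain ⟨x0, hx0B, hx0⟩ := hB0
    refine ⟨B.filter (fun x => ¬ H.Adj v x), (filter_subset _ _).trans hBs,
      ⟨x0, mem_filter.2 ⟨hx0B, hx0⟩⟩,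
      ⟨v, mem_sdiff.2 ⟨hv, fun h => hvB (filter_subset _ _ h)⟩⟩, Or.inl ?_⟩
    intro x hx y hy
    obtain ⟨hxB, hxn⟩ := mem_filter.1 hx
    rcases hcases y (mem_sdiff.1 hy).1 with rfl | hyB | hyC
    · exact fun h => hxn h.symm
    · by_cases hyA : H.Adj v y
      · intro hxy
        exact hpat x y v c0 hxy hyA.symm hc0 (fun h => hxn h.symm)
          (hanti y hyB c0 hc0C) (hanti x hxB c0 hc0C)
      · exact absurd (mem_filter.2 ⟨hyB, hyA⟩) (mem_sdiff.1 hy).2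
    · exact hanti x hxB y hyC
  by_cases hC0 : ∃ x ∈ C, ¬ H.Adj v x
  · obtain ⟨x0, hx0C, hx0⟩ := hC0
    refine ⟨C.filter (fun x => ¬ H.Adj v x), (filter_subset _ _).trans hCs,
      ⟨x0, mem_filter.2 ⟨hx0C, hx0⟩⟩,
      ⟨v, mem_sdiff.2 ⟨hv, fun h => hvC (filter_subset _ _ h)⟩⟩, Or.inl ?_⟩
    intro x hx y hy
    obtain ⟨hxC, hxn⟩ := mem_filter.1 hx
    rcases hcases y (mem_sdiff.1 hy).1 with rfl | hyB | hyC
    · exact fun h => hxn h.symm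
    · exact fun h => hanti y hyB x hxC h.symm
    · by_cases hyA : H.Adj v y
      · intro hxy
        exact hpat x y v b0 hxy hyA.symm hb0 (fun h => hxn h.symm)
          (fun h => hanti b0 hb0B y hyC h.symm) (fun h => hanti b0 hb0B x hxC h.symm)
      · exact absurd (mem_filter.2 ⟨hyC, hyA⟩) (mem_sdiff.1 hy).2
  · push_neg at hB0 hC0
    refine ⟨{v}, singleton_subset_iff.2 hv, singleton_nonempty v,
      ⟨b0, mem_sdiff.2 ⟨hBs hb0B, fun h => hvB (mem_singleton.1 h ▸ hb0B)⟩⟩, Or.inr ?_⟩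
    intro x hx y hy
    rcases hcases y (mem_sdiff.1 hy).1 with rfl | hyB | hyC
    · exact absurd (mem_singleton_self _) (mem_sdiff.1 hy).2
    · exact (mem_singleton.1 hx) ▸ hB0 y hyB
    · exact (mem_singleton.1 hx) ▸ hC0 y hyC

lemma decomp {V : Type*} [DecidableEq V] {G : SimpleGraph V} (hpat : Pat G) :
    ∀ s : Finset V, 2 ≤ s.card →
    ∃ B ⊆ s, B.Nonempty ∧ (s \ B).Nonempty ∧
      ((∀ x ∈ B, ∀ y ∈ s \ B, ¬G.Adj x y) ∨ (∀ x ∈ B, ∀ y ∈ s \ B, G.Adj x y)) := by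
  intro s
  induction s using Finset.strongInduction with
  | _ s ih =>
    intro hs2
    by_cases h2 : s.card = 2
    · obtain ⟨u, v, huv, rfl⟩ := Finset.card_eq_two.1 h2
      have hsd : ({u, v} : Finset V) \ {u} = {v} := by
        ext x
        simp only [mem_sdiff, mem_insert, mem_singleton]
        constructor
        · rintro ⟨h1 | h1, h2⟩ <;> simp_all
        · rintro rfl; exact ⟨Or.inr rfl, fun h => huv h.symm⟩
      have hmem : ∀ x ∈ ({u} : Finset V), ∀ y ∈ ({u, v} : Finset V) \ {u}, x = u ∧ y = v := by
        intro x hx y hy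
        rw [hsd] at hy
        exact ⟨mem_singleton.1 hx, mem_singleton.1 hy⟩
      refine ⟨{u}, singleton_subset_iff.2 (mem_insert_self u {v}), singleton_nonempty u,
        ⟨v, by rw [hsd]; exact mem_singleton_self v⟩, ?_⟩
      by_cases hadj : G.Adj u v
      · right; intro x hx y hy; obtain ⟨rfl, rfl⟩ := hmem x hx y hy; exact hadj
      · left; intro x hx y hy; obtain ⟨rfl, rfl⟩ := hmem x hx y hy; exact hadj
    · have hs3 : 3 ≤ s.card := by omega
      obtain ⟨v, hv⟩ : s.Nonempty := Finset.card_pos.1 (by omega)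
      have hcard' : (s.erase v).card = s.card - 1 := card_erase_of_mem hv
      obtain ⟨B, hBs', hBne, hCne, hor⟩ := ih (s.erase v) (erase_ssubset hv) (by omega)
      have hBC : B ∪ (s.erase v \ B) = s.erase v := union_sdiff_of_subset hBs'
      have hdisj : ∀ x ∈ B, x ∉ s.erase v \ B := fun x hx hxC => (mem_sdiff.1 hxC).2 hx
      rcases hor with hanti | hcomp
      · exact case1 G hpat s v hv B _ hBC hdisj hBne hCne hanti
      · obtain ⟨X, hXs, hXne, hXc, hor'⟩ := case1 Gᶜ (patCompl hpat) s v hv B _ hBC hdisj hBne hCne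
          (fun x hx y hy h => h.2 (hcomp x hx y hy))
        refine ⟨X, hXs, hXne, hXc, ?_⟩
        rcases hor' with h | h
        · right; intro x hx y hy
          have hne : x ≠ y := fun he => (mem_sdiff.1 hy).2 (he ▸ hx)
          by_contra hna
          exact h x hx y hy ((compl_adj G x y).2 ⟨hne, hna⟩)
        · left; intro x hx y hy hadj
          exact ((compl_adj G x y).1 (h x hx y hy)).2 hadj

lemma fin2_eq_of_ne {a b c : Fin 2} (h1 : a ≠ c) (h2 : b ≠ c) : a = b := by omega

lemma fin2_triangle {a b c : Fin 2} (h1 : a ≠ b) (h2 : a ≠ c) (h3 : b ≠ c) : False := by omega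

lemma joinCase {V : Type*} [DecidableEq V] (G : SimpleGraph V) (s B C : Finset V)
    (hBs : B ⊆ s) (hCs : C ⊆ s)
    (hunion : ∀ x ∈ s, x ∈ B ∨ x ∈ C) (hdisj : ∀ x ∈ B, x ∉ C)
    (hcomp : ∀ x ∈ B, ∀ y ∈ C, G.Adj x y)
    (hBmono : ∀ u ∈ B, ∀ v ∈ B, ¬G.Adj u v)
    (f2 : V → Fin 2) (hf2 : ∀ u ∈ C, ∀ v ∈ C, G.Adj u v → f2 u ≠ f2 v)
    (hS1C : ∀ f : V → Fin 2, (∀ u ∈ C, ∀ v ∈ C, G.Adj u v → f u ≠ f v) →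
      ∀ S : Finset V, S ⊆ C → (∀ u ∈ C, ∀ v ∈ C, G.Adj u v → u ∈ S ∨ v ∈ S) →
      ∃ T : Finset V, T ⊆ C ∧ (∀ u ∈ C, ∀ v ∈ C, G.Adj u v → u ∈ T ∨ v ∈ T) ∧
        (∀ u ∈ T, ∀ v ∈ T, ¬G.Adj u v) ∧ T.card ≤ S.card)
    (S : Finset V) (hSs : S ⊆ s) (f : V → Fin 2)
    (hf : ∀ u ∈ s \ S, ∀ v ∈ s \ S, G.Adj u v → f u ≠ f v) :
    ∃ T : Finset V, T ⊆ s ∧ (∃ f' : V → Fin 2, ∀ u ∈ s \ T, ∀ v ∈ s \ T, G.Adj u v → f' u ≠ f' v) ∧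
      (∀ u ∈ T, ∀ v ∈ T, ¬G.Adj u v) ∧ T.card ≤ S.card := by
  classical
  by_cases hBsub : B ⊆ S
  · refine ⟨B, hBs, ⟨f2, ?_⟩, hBmono, card_le_card hBsub⟩
    intro u hu v hv hadj
    have huC : u ∈ C := by
      obtain ⟨hus, huB⟩ := mem_sdiff.1 hu
      exact (hunion u hus).resolve_left huB
    have hvC : v ∈ C := by
      obtain ⟨hvs, hvB⟩ := mem_sdiff.1 hv
      exact (hunion v hvs).resolve_left hvB
    exact hf2 u huC v hvC hadj
  · obtain ⟨x1, hx1B, hx1S⟩ := not_subset.1 hBsub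
    have hvc : ∀ u ∈ C, ∀ v ∈ C, G.Adj u v → u ∈ S ∩ C ∨ v ∈ S ∩ C := by
      intro u hu v hv hadj
      by_contra hcon
      push_neg at hcon
      have huS : u ∉ S := fun hh => hcon.1 (mem_inter.2 ⟨hh, hu⟩)
      have hvS : v ∉ S := fun hh => hcon.2 (mem_inter.2 ⟨hh, hv⟩)
      have hx1m : x1 ∈ s \ S := mem_sdiff.2 ⟨hBs hx1B, hx1S⟩
      have hum : u ∈ s \ S := mem_sdiff.2 ⟨hCs hu, huS⟩
      have hvm : v ∈ s \ S := mem_sdiff.2 ⟨hCs hv, hvS⟩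
      exact fin2_triangle (hf x1 hx1m u hum (hcomp x1 hx1B u hu))
        (hf x1 hx1m v hvm (hcomp x1 hx1B v hv)) (hf u hum v hvm hadj)
    obtain ⟨T, hTC, hTvc, hTind, hTcard⟩ := hS1C f2 hf2 (S ∩ C) inter_subset_right hvc
    refine ⟨T, hTC.trans hCs, ⟨fun x => if x ∈ B then 0 else 1, ?_⟩, hTind,
      hTcard.trans (card_le_card inter_subset_left)⟩
    intro u hu v hv hadj
    obtain ⟨hus, huT⟩ := mem_sdiff.1 hu
    obtain ⟨hvs, hvT⟩ := mem_sdiff.1 hv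
    rcases hunion u hus with huB | huC <;> rcases hunion v hvs with hvB | hvC
    · exact absurd hadj (hBmono u huB v hvB)
    · have hvB : v ∉ B := fun h => hdisj v h hvC
      dsimp only
      split_ifs with h1 h2 <;> first | decide | exact absurd h2 hvB | exact absurd huB h1
    · have huB : u ∉ B := fun h => hdisj u h huC
      dsimp only
      split_ifs with h1 h2 <;> first | decide | exact absurd h1 huB | exact absurd hvB h2
    · exact absurd (hTvc u huC v hvC hadj) (by simp [huT, hvT])

lemma fin3_four {a b c d : Fin 3} (h1 : a ≠ b) (h2 : c ≠ d) (h3 : a ≠ c) (h4 : a ≠ d)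
    (h5 : b ≠ c) (h6 : b ≠ d) : False := by omega

lemma noEdge_of_small {V : Type*} {G : SimpleGraph V} {s : Finset V} (h : s.card ≤ 1) :
    ∀ u ∈ s, ∀ v ∈ s, ¬G.Adj u v := by
  intro u hu v hv hadj
  have : 1 < s.card := Finset.one_lt_card.2 ⟨u, hu, v, hv, hadj.ne⟩
  omega

lemma mainInd {V : Type*} [DecidableEq V] (G : SimpleGraph V) (hpat : Pat G) (s : Finset V) :
    (∀ f : V → Fin 2, (∀ u ∈ s, ∀ v ∈ s, G.Adj u v → f u ≠ f v) →
      ∀ S : Finset V, S ⊆ s → (∀ u ∈ s, ∀ v ∈ s, G.Adj u v → u ∈ S ∨ v ∈ S) →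
      ∃ T : Finset V, T ⊆ s ∧ (∀ u ∈ s, ∀ v ∈ s, G.Adj u v → u ∈ T ∨ v ∈ T) ∧
        (∀ u ∈ T, ∀ v ∈ T, ¬G.Adj u v) ∧ T.card ≤ S.card)
    ∧
    (∀ g : V → Fin 3, (∀ u ∈ s, ∀ v ∈ s, G.Adj u v → g u ≠ g v) →
      ∀ S : Finset V, S ⊆ s → (∃ f : V → Fin 2, ∀ u ∈ s \ S, ∀ v ∈ s \ S, G.Adj u v → f u ≠ f v) →
      ∃ T : Finset V, T ⊆ s ∧ (∃ f' : V → Fin 2, ∀ u ∈ s \ T, ∀ v ∈ s \ T, G.Adj u v → f' u ≠ f' v) ∧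
        (∀ u ∈ T, ∀ v ∈ T, ¬G.Adj u v) ∧ T.card ≤ S.card) := by
  induction s using Finset.strongInduction with
  | _ s ih =>
  by_cases hsmall : s.card ≤ 1
  · constructor
    · intro f hf S hSs hSvc
      exact ⟨∅, empty_subset _,
        fun u hu v hv hadj => absurd hadj (noEdge_of_small hsmall u hu v hv),
        by simp, by simp⟩
    · intro g hg S hSs hSb
      refine ⟨∅, empty_subset _, ⟨fun _ => 0, ?_⟩, by simp, by simp⟩
      intro u hu v hv hadj
      exact absurd hadj (noEdge_of_small hsmall u (mem_sdiff.1 hu).1 v (mem_sdiff.1 hv).1)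
  · obtain ⟨B, hBs, hBne, hCne, hor⟩ := decomp hpat s (by omega)
    set C := s \ B with hCdef
    have hCs : C ⊆ s := sdiff_subset
    have hunion : ∀ x ∈ s, x ∈ B ∨ x ∈ C := by
      intro x hx
      by_cases h : x ∈ B
      · exact Or.inl h
      · exact Or.inr (mem_sdiff.2 ⟨hx, h⟩)
    have hdisj : ∀ x ∈ B, x ∉ C := fun x hx hxC => (mem_sdiff.1 hxC).2 hx
    have hBss : B ⊂ s := (Finset.ssubset_iff_of_subset hBs).2
      (by obtain ⟨y, hy⟩ := hCne; exact ⟨y, (mem_sdiff.1 hy).1, (mem_sdiff.1 hy).2⟩)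
    have hCss : C ⊂ s := (Finset.ssubset_iff_of_subset hCs).2
      (by obtain ⟨y, hy⟩ := hBne; exact ⟨y, hBs hy, fun h => (mem_sdiff.1 h).2 hy⟩)
    have hcardsplit : ∀ S : Finset V, S ⊆ s → (S ∩ B).card + (S ∩ C).card = S.card := by
      intro S hSs
      have h1 : S ∩ C = S \ B := by
        ext x
        simp only [hCdef, mem_inter, mem_sdiff]
        exact ⟨fun h => ⟨h.1, h.2.2⟩, fun h => ⟨h.1, hSs h.1, h.2⟩⟩
      rw [h1]
      exact card_inter_add_card_sdiff S B
    have hsub : ∀ S D : Finset V, D ⊆ s → ∀ x, x ∈ D \ (S ∩ D) → x ∈ s \ S := by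
      intro S D hDs x hx
      obtain ⟨h1, h2⟩ := mem_sdiff.1 hx
      exact mem_sdiff.2 ⟨hDs h1, fun h => h2 (mem_inter.2 ⟨h, h1⟩)⟩
    rcases hor with hanti | hcomp
    · -- disconnected case
      constructor
      · intro f hf S hSs hSvc
        obtain ⟨TB, hTBB, hTBvc, hTBind, hTBcard⟩ := (ih B hBss).1 f
          (fun u hu v hv => hf u (hBs hu) v (hBs hv)) (S ∩ B) inter_subset_right
          (fun u hu v hv hadj => (hSvc u (hBs hu) v (hBs hv) hadj).imp
            (fun h => mem_inter.2 ⟨h, hu⟩) (fun h => mem_inter.2 ⟨h, hv⟩))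
        obtain ⟨TC, hTCC, hTCvc, hTCind, hTCcard⟩ := (ih C hCss).1 f
          (fun u hu v hv => hf u (hCs hu) v (hCs hv)) (S ∩ C) inter_subset_right
          (fun u hu v hv hadj => (hSvc u (hCs hu) v (hCs hv) hadj).imp
            (fun h => mem_inter.2 ⟨h, hu⟩) (fun h => mem_inter.2 ⟨h, hv⟩))
        refine ⟨TB ∪ TC, union_subset (hTBB.trans hBs) (hTCC.trans hCs), ?_, ?_, ?_⟩
        · intro u hu v hv hadj
          rcases hunion u hu with huB | huC <;> rcases hunion v hv with hvB | hvC
          · exact (hTBvc u huB v hvB hadj).imp (mem_union_left _) (mem_union_left _)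
          · exact absurd hadj (hanti u huB v hvC)
          · exact absurd hadj.symm (hanti v hvB u huC)
          · exact (hTCvc u huC v hvC hadj).imp (mem_union_right _) (mem_union_right _)
        · intro u hu v hv
          rcases mem_union.1 hu with h1 | h1 <;> rcases mem_union.1 hv with h2 | h2
          · exact hTBind u h1 v h2
          · exact hanti u (hTBB h1) v (hTCC h2)
          · exact fun h => hanti v (hTBB h2) u (hTCC h1) h.symm
          · exact hTCind u h1 v h2
        · calc (TB ∪ TC).card ≤ TB.card + TC.card := card_union_le _ _
            _ ≤ (S ∩ B).card + (S ∩ C).card := Nat.add_le_add hTBcard hTCcard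
            _ = S.card := hcardsplit S hSs
      · intro g hg S hSs hbip
        obtain ⟨f, hf⟩ := hbip
        obtain ⟨TB, hTBB, ⟨fB, hfB⟩, hTBind, hTBcard⟩ := (ih B hBss).2 g
          (fun u hu v hv => hg u (hBs hu) v (hBs hv)) (S ∩ B) inter_subset_right
          ⟨f, fun u hu v hv hadj => hf u (hsub S B hBs u hu) v (hsub S B hBs v hv) hadj⟩
        obtain ⟨TC, hTCC, ⟨fC, hfC⟩, hTCind, hTCcard⟩ := (ih C hCss).2 g
          (fun u hu v hv => hg u (hCs hu) v (hCs hv)) (S ∩ C) inter_subset_right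
          ⟨f, fun u hu v hv hadj => hf u (hsub S C hCs u hu) v (hsub S C hCs v hv) hadj⟩
        refine ⟨TB ∪ TC, union_subset (hTBB.trans hBs) (hTCC.trans hCs),
          ⟨fun x => if x ∈ B then fB x else fC x, ?_⟩, ?_, ?_⟩
        · intro u hu v hv hadj
          obtain ⟨hus, huT⟩ := mem_sdiff.1 hu
          obtain ⟨hvs, hvT⟩ := mem_sdiff.1 hv
          rcases hunion u hus with huB | huC <;> rcases hunion v hvs with hvB | hvC
          · dsimp only
            rw [if_pos huB, if_pos hvB]
            exact hfB u (mem_sdiff.2 ⟨huB, fun h => huT (mem_union_left _ h)⟩)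
              v (mem_sdiff.2 ⟨hvB, fun h => hvT (mem_union_left _ h)⟩) hadj
          · exact absurd hadj (hanti u huB v hvC)
          · exact absurd hadj.symm (hanti v hvB u huC)
          · dsimp only
            rw [if_neg (fun h => hdisj u h huC), if_neg (fun h => hdisj v h hvC)]
            exact hfC u (mem_sdiff.2 ⟨huC, fun h => huT (mem_union_right _ h)⟩)
              v (mem_sdiff.2 ⟨hvC, fun h => hvT (mem_union_right _ h)⟩) hadj
        · intro u hu v hv
          rcases mem_union.1 hu with h1 | h1 <;> rcases mem_union.1 hv with h2 | h2
          · exact hTBind u h1 v h2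
          · exact hanti u (hTBB h1) v (hTCC h2)
          · exact fun h => hanti v (hTBB h2) u (hTCC h1) h.symm
          · exact hTCind u h1 v h2
        · calc (TB ∪ TC).card ≤ TB.card + TC.card := card_union_le _ _
            _ ≤ (S ∩ B).card + (S ∩ C).card := Nat.add_le_add hTBcard hTCcard
            _ = S.card := hcardsplit S hSs
    · -- join case
      obtain ⟨b0, hb0⟩ := hBne
      obtain ⟨c0, hc0⟩ := hCne
      constructor
      · intro f hf S hSs hSvc
        have hBmono : ∀ u ∈ B, ∀ v ∈ B, ¬G.Adj u v := by
          intro u hu v hv hadj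
          exact hf u (hBs hu) v (hBs hv) hadj
            (fin2_eq_of_ne (hf u (hBs hu) c0 (hCs hc0) (hcomp u hu c0 hc0))
              (hf v (hBs hv) c0 (hCs hc0) (hcomp v hv c0 hc0)))
        have hCmono : ∀ u ∈ C, ∀ v ∈ C, ¬G.Adj u v := by
          intro u hu v hv hadj
          exact hf u (hCs hu) v (hCs hv) hadj
            (fin2_eq_of_ne (hf u (hCs hu) b0 (hBs hb0) ((hcomp b0 hb0 u hu).symm))
              (hf v (hCs hv) b0 (hBs hb0) ((hcomp b0 hb0 v hv).symm)))
        by_cases hBsub : B ⊆ S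
        · refine ⟨B, hBs, ?_, hBmono, card_le_card hBsub⟩
          intro u hu v hv hadj
          rcases hunion u hu with h | h
          · exact Or.inl h
          · rcases hunion v hv with h2 | h2
            · exact Or.inr h2
            · exact absurd hadj (hCmono u h v h2)
        · obtain ⟨x1, hx1B, hx1S⟩ := not_subset.1 hBsub
          have hCS : C ⊆ S := by
            intro y hy
            rcases hSvc x1 (hBs hx1B) y (hCs hy) (hcomp x1 hx1B y hy) with h | h
            · exact absurd h hx1S
            · exact h
          refine ⟨C, hCs, ?_, hCmono, card_le_card hCS⟩
          intro u hu v hv hadj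
          rcases hunion u hu with h | h
          · rcases hunion v hv with h2 | h2
            · exact absurd hadj (hBmono u h v h2)
            · exact Or.inr h2
          · exact Or.inl h
      · intro g hg S hSs hbip
        obtain ⟨f, hf⟩ := hbip
        have horient : (∀ u ∈ B, ∀ u' ∈ B, g u = g u') ∨ (∀ u ∈ C, ∀ u' ∈ C, g u = g u') := by
          by_contra hcon
          push_neg at hcon
          obtain ⟨⟨u, hu, u', hu', hne⟩, ⟨w, hw, w', hw', hne'⟩⟩ := hcon
          exact fin3_four hne hne'
            (hg u (hBs hu) w (hCs hw) (hcomp u hu w hw))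
            (hg u (hBs hu) w' (hCs hw') (hcomp u hu w' hw'))
            (hg u' (hBs hu') w (hCs hw) (hcomp u' hu' w hw))
            (hg u' (hBs hu') w' (hCs hw') (hcomp u' hu' w' hw'))
        have hhelp : ∀ z : Fin 3, ∃ h : Fin 3 → Fin 2,
            ∀ x y, x ≠ z → y ≠ z → x ≠ y → h x ≠ h y := by decide
        rcases horient with hmono | hmono
        · have hBmono : ∀ u ∈ B, ∀ v ∈ B, ¬G.Adj u v :=
            fun u hu v hv hadj => hg u (hBs hu) v (hBs hv) hadj (hmono u hu v hv)
          obtain ⟨h2, hh2⟩ := hhelp (g b0)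
          have hf2 : ∀ u ∈ C, ∀ v ∈ C, G.Adj u v → h2 (g u) ≠ h2 (g v) := by
            intro u hu v hv hadj
            exact hh2 _ _
              (fun he => hg u (hCs hu) b0 (hBs hb0) ((hcomp b0 hb0 u hu).symm) (he.trans (hmono b0 hb0 b0 hb0).symm ▸ rfl))
              (fun he => hg v (hCs hv) b0 (hBs hb0) ((hcomp b0 hb0 v hv).symm) he)
              (hg u (hCs hu) v (hCs hv) hadj)
          exact joinCase G s B C hBs hCs hunion hdisj hcomp hBmono (fun x => h2 (g x)) hf2
            ((ih C hCss).1) S hSs f hf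
        · have hCmono : ∀ u ∈ C, ∀ v ∈ C, ¬G.Adj u v :=
            fun u hu v hv hadj => hg u (hCs hu) v (hCs hv) hadj (hmono u hu v hv)
          obtain ⟨h2, hh2⟩ := hhelp (g c0)
          have hf2 : ∀ u ∈ B, ∀ v ∈ B, G.Adj u v → h2 (g u) ≠ h2 (g v) := by
            intro u hu v hv hadj
            exact hh2 _ _
              (fun he => hg u (hBs hu) c0 (hCs hc0) (hcomp u hu c0 hc0) he)
              (fun he => hg v (hBs hv) c0 (hCs hc0) (hcomp v hv c0 hc0) he)
              (hg u (hBs hu) v (hBs hv) hadj)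
          exact joinCase G s C B hCs hBs (fun x hx => (hunion x hx).symm)
            (fun x hx h => hdisj x h hx) (fun x hx y hy => (hcomp y hy x hx).symm)
            hCmono (fun x => h2 (g x)) hf2 ((ih B hBss).1) S hSs f hf


lemma colorable_two_iff' {V : Type*} (G : SimpleGraph V) (t : Set V) :
    (G.induce t).Colorable 2 ↔ ∃ f : V → Fin 2, ∀ u ∈ t, ∀ v ∈ t, G.Adj u v → f u ≠ f v := by
  classical
  constructor
  · rintro ⟨c⟩
    refine ⟨fun v => if h : v ∈ t then c ⟨v, h⟩ else 0, ?_⟩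
    intro u hu v hv hadj
    dsimp only
    rw [dif_pos hu, dif_pos hv]
    exact c.valid (by simpa using hadj : (G.induce t).Adj ⟨u, hu⟩ ⟨v, hv⟩)
  · rintro ⟨f, hf⟩
    exact ⟨SimpleGraph.Coloring.mk (fun x => f x.1)
      (fun {a b} hab => hf a.1 a.2 b.1 b.2 (by simpa using hab))⟩

end AuxOCT

open Finset in
theorem stmt_14 {V : Type*} [Fintype V] (G : SimpleGraph V)
    (hcol : G.Colorable 3) (hfree : HFree (pathGraph 4) G) :
    ioct G = oct G := by
  classical
  have hpat : Pat G := pat_of_hfree hfree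
  obtain ⟨c⟩ := hcol
  set S0 : Finset V := Finset.univ.filter (fun v => c v = 2) with hS0def
  have hS0oct : IsOCT G S0 := by
    rw [IsOCT, colorable_two_iff']
    refine ⟨fun v => if c v = 0 then 0 else 1, ?_⟩
    intro u hu v hv hadj
    have hu2 : c u ≠ 2 := fun h => hu (by simp [hS0def, h])
    have hv2 : c v ≠ 2 := fun h => hv (by simp [hS0def, h])
    have key : ∀ x y : Fin 3, x ≠ y → x ≠ 2 → y ≠ 2 →
        (if x = 0 then (0 : Fin 2) else 1) ≠ (if y = 0 then 0 else 1) := by decide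
    exact key _ _ (c.valid hadj) hu2 hv2
  have hS0is : IsIS G ↑S0 := by
    intro u hu v hv _ hadj
    have h1 : c u = 2 := by simpa [hS0def] using hu
    have h2 : c v = 2 := by simpa [hS0def] using hv
    exact c.valid hadj (h1.trans h2.symm)
  have hne1 : {n | ∃ S : Finset V, IsOCT G S ∧ IsIS G ↑S ∧ S.card = n}.Nonempty :=
    ⟨S0.card, S0, hS0oct, hS0is, rfl⟩
  have hne2 : {n | ∃ S : Finset V, IsOCT G S ∧ S.card = n}.Nonempty :=
    ⟨S0.card, S0, hS0oct, rfl⟩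
  unfold ioct oct
  apply le_antisymm
  · obtain ⟨S, hSoct, hScard⟩ := Nat.sInf_mem hne2
    have hSbip : ∃ f : V → Fin 2,
        ∀ u ∈ Finset.univ \ S, ∀ v ∈ Finset.univ \ S, G.Adj u v → f u ≠ f v := by
      obtain ⟨f, hf⟩ := (colorable_two_iff' G _).1 hSoct
      exact ⟨f, fun u hu v hv hadj =>
        hf u (by simpa using (mem_sdiff.1 hu).2) v (by simpa using (mem_sdiff.1 hv).2) hadj⟩
    obtain ⟨T, hTs, ⟨fT, hfT⟩, hTind, hTcard⟩ := (mainInd G hpat Finset.univ).2 (fun v => c v)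
      (fun u _ v _ h => c.valid h) S (subset_univ S) hSbip
    have hToct : IsOCT G T := by
      rw [IsOCT, colorable_two_iff']
      exact ⟨fT, fun u hu v hv hadj =>
        hfT u (mem_sdiff.2 ⟨mem_univ u, by simpa using hu⟩)
          v (mem_sdiff.2 ⟨mem_univ v, by simpa using hv⟩) hadj⟩
    have hTis : IsIS G ↑T := fun u hu v hv _ =>
      hTind u (by simpa using hu) v (by simpa using hv)
    calc sInf {n | ∃ S : Finset V, IsOCT G S ∧ IsIS G ↑S ∧ S.card = n} ≤ T.card :=
          Nat.sInf_le ⟨T, hToct, hTis, rfl⟩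
      _ ≤ S.card := hTcard
      _ = _ := hScard
  · obtain ⟨T, h1, h2, h3⟩ := Nat.sInf_mem hne1
    exact Nat.sInf_le ⟨T, h1, h3⟩
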